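/- Let A_1, …, A_m be real n×n matrices, let α_1, …, α_m be nonnegative real numbers with Σ_i α_i = 1, let Q be a real symmetric positive definite n×n matrix, and let P be a real symmetric matrix satisfying the Lyapunov equation (Σ_i α_i A_i)ᵀ P + P (Σ_i α_i A_i) = -Q. Then for every nonzero x ∈ ℝⁿ there exists an index i ∈ {1, …, m} such that xᵀ(A_iᵀ P + P A_i) x < 0. -/

import Mathlib

open Matrix

private lemma sumMulVec {n m : ℕ} (M : Fin m → Matrix (Fin n) (Fin n) ℝ) (x : Fin n → ℝ) :
    (∑ i, M i) *ᵥ x = ∑ i, M i *ᵥ x := by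
  ext j
  simp [Matrix.mulVec, dotProduct, Finset.sum_apply, Matrix.sum_apply, Finset.sum_mul]
  rw [Finset.sum_comm]

private lemma dotSum {n m : ℕ} (v : Fin m → (Fin n → ℝ)) (x : Fin n → ℝ) :
    x ⬝ᵥ (∑ i, v i) = ∑ i, x ⬝ᵥ v i := by
  simp [dotProduct, Finset.sum_apply, Finset.mul_sum]
  rw [Finset.sum_comm]

/-- If P solves the Lyapunov equation for a convex combination
`∑ i, α i • A i` with symmetric positive definite Q, then for every nonzero x
there is an index i with xᵀ(A_iᵀ P + P A_i) x < 0. -/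
theorem lyapunov_convex_combination_pointwise_decrease
    {n m : ℕ} (A : Fin m → Matrix (Fin n) (Fin n) ℝ)
    (α : Fin m → ℝ) (hα : ∀ i, 0 ≤ α i) (hsum : ∑ i, α i = 1)
    (Q : Matrix (Fin n) (Fin n) ℝ) (hQsymm : Q.IsSymm) (hQ : Q.PosDef)
    (P : Matrix (Fin n) (Fin n) ℝ) (hPsymm : P.IsSymm)
    (hLyap : (∑ i, α i • A i)ᵀ * P + P * (∑ i, α i • A i) = -Q) :
    ∀ x : Fin n → ℝ, x ≠ 0 →
      ∃ i : Fin m, x ⬝ᵥ ((A i)ᵀ * P + P * A i).mulVec x < 0 := by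
  intro x hx
  by_contra h
  push_neg at h
  have hsumM : (∑ i, α i • A i)ᵀ * P + P * (∑ i, α i • A i)
      = ∑ i, α i • ((A i)ᵀ * P + P * A i) := by
    simp [Finset.sum_smul, Finset.sum_mul, Finset.mul_sum, transpose_sum,
      smul_add, Matrix.smul_mul, Matrix.mul_smul, Finset.sum_add_distrib]
  have hkey : x ⬝ᵥ ((∑ i, α i • A i)ᵀ * P + P * (∑ i, α i • A i)).mulVec x
      = ∑ i, α i * (x ⬝ᵥ ((A i)ᵀ * P + P * A i).mulVec x) := by
    rw [hsumM, sumMulVec, dotSum]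
    simp [Matrix.add_mulVec, Matrix.smul_mulVec, dotProduct_add, dotProduct_smul, smul_eq_mul, mul_add]
  have hneg : x ⬝ᵥ ((∑ i, α i • A i)ᵀ * P + P * (∑ i, α i • A i)).mulVec x < 0 := by
    rw [hLyap]
    have := hQ.dotProduct_mulVec_pos hx
    simpa [Matrix.neg_mulVec] using neg_neg_of_pos this
  rw [hkey] at hneg
  have : (0:ℝ) ≤ ∑ i, α i * (x ⬝ᵥ ((A i)ᵀ * P + P * A i).mulVec x) :=
    Finset.sum_nonneg fun i _ => mul_nonneg (hα i) (h i)
  linarith
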